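/- Strang splitting is second-order accurate: for elements A, B of a Banach algebra, exp(δ(A+B)) = exp(δB/2)·exp(δA)·exp(δB/2) + O(δ³) as δ → 0. -/

import Mathlib

open NormedSpace Set

section TaylorCube

variable {E : Type*} [NormedAddCommGroup E] [NormedSpace ℝ E]

private lemma iterWithin_eq {f : ℝ → E} (hf : ContDiff ℝ 3 f) {s : Set ℝ}
    (hs : UniqueDiffOn ℝ s) :
    ∀ k : ℕ, k ≤ 3 → Set.EqOn (iteratedDerivWithin k f s) (iteratedDeriv k f) s := by
  intro k
  induction k with
  | zero => intro _ x hx; simp [iteratedDerivWithin_zero, iteratedDeriv_zero]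
  | succ n ih =>
    intro hn x hx
    have hn3 : n < 3 := by omega
    have hdiff : Differentiable ℝ (iteratedDeriv n f) :=
      hf.differentiable_iteratedDeriv n (by exact_mod_cast hn3)
    rw [iteratedDerivWithin_succ,
      derivWithin_congr (ih (by omega)) (ih (by omega) hx),
      (hdiff x).derivWithin (hs x hx), ← iteratedDeriv_succ]

private lemma taylor_cube_aux {f : ℝ → E} (hf : ContDiff ℝ 3 f)
    (h0 : iteratedDeriv 0 f 0 = 0) (h1 : iteratedDeriv 1 f 0 = 0)
    (h2 : iteratedDeriv 2 f 0 = 0)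
    {M : ℝ} (hM : ∀ y ∈ Icc (0:ℝ) 1, ‖iteratedDeriv 3 f y‖ ≤ M) :
    ∀ x ∈ Icc (0:ℝ) 1, ‖f x‖ ≤ M * x ^ 3 := by
  intro x hx
  have hs : UniqueDiffOn ℝ (Icc (0:ℝ) 1) := uniqueDiffOn_Icc one_pos
  have heq := iterWithin_eq hf hs
  have h01 : (0:ℝ) ∈ Icc (0:ℝ) 1 := by constructor <;> norm_num
  have hM0 : 0 ≤ M := le_trans (norm_nonneg _) (hM 0 h01)
  have hfO : ContDiffOn ℝ ((2:ℕ) + 1) f (Icc (0:ℝ) 1) := by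
    exact_mod_cast hf.contDiffOn
  have hC : ∀ y ∈ Icc (0:ℝ) 1,
      ‖iteratedDerivWithin ((2:ℕ)+1) f (Icc (0:ℝ) 1) y‖ ≤ M := by
    intro y hy
    rw [show (2:ℕ)+1 = 3 from rfl, heq 3 le_rfl hy]
    exact hM y hy
  have hbound := taylor_mean_remainder_bound (n := 2) zero_le_one hfO hx hC
  have htaylor : taylorWithinEval f 2 (Icc (0:ℝ) 1) 0 x = 0 := by
    rw [taylor_within_apply]
    apply Finset.sum_eq_zero
    intro k hk
    have hk2 : k ≤ 2 := by
      simp only [Finset.mem_range] at hk; omega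
    rw [heq k (by omega) h01]
    interval_cases k <;> simp [h0, h1, h2]
  rw [htaylor, sub_zero, sub_zero] at hbound
  refine hbound.trans ?_
  have hx0 : 0 ≤ x := hx.1
  have hfac : ((Nat.factorial 2 : ℕ) : ℝ) = 2 := by norm_num [Nat.factorial]
  rw [hfac]
  have hxp : (0:ℝ) ≤ x ^ (2+1) := pow_nonneg hx0 _
  have : x ^ (2+1) = x ^ 3 := by norm_num
  rw [this]
  nlinarith [mul_nonneg hM0 (pow_nonneg hx0 3)]

private lemma cube_bound {f : ℝ → E} (hf : ContDiff ℝ 3 f) (h0 : f 0 = 0)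
    (h1 : deriv f 0 = 0) (h2 : deriv (deriv f) 0 = 0) :
    ∃ C > 0, ∀ δ : ℝ, |δ| ≤ 1 → ‖f δ‖ ≤ C * |δ| ^ 3 := by
  obtain ⟨M, hM⟩ := (isCompact_Icc (a := (-1:ℝ)) (b := 1)).exists_bound_of_continuousOn
    ((hf.continuous_iteratedDeriv 3 (by norm_num)).continuousOn
      (s := Icc (-1:ℝ) 1))
  set M' : ℝ := max M 0 with hM'
  have hM'B : ∀ y ∈ Icc (-1:ℝ) 1, ‖iteratedDeriv 3 f y‖ ≤ M' :=
    fun y hy => (hM y hy).trans (le_max_left _ _)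
  have hi0 : iteratedDeriv 0 f 0 = 0 := by simpa [iteratedDeriv_zero] using h0
  have hi1 : iteratedDeriv 1 f 0 = 0 := by simpa [iteratedDeriv_one] using h1
  have hi2 : iteratedDeriv 2 f 0 = 0 := by
    rw [show (2:ℕ) = 1 + 1 from rfl, iteratedDeriv_succ, iteratedDeriv_one]
    exact h2
  refine ⟨M' + 1, by positivity, fun δ hδ => ?_⟩
  have habs : |δ| ^ 3 ≥ 0 := by positivity
  rcases le_or_gt 0 δ with hpos | hneg
  · have hsub : Icc (0:ℝ) 1 ⊆ Icc (-1:ℝ) 1 := Icc_subset_Icc (by norm_num) le_rfl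
    have := taylor_cube_aux hf hi0 hi1 hi2
      (fun y hy => hM'B y (hsub hy)) δ ⟨hpos, by rwa [abs_of_nonneg hpos] at hδ⟩
    calc ‖f δ‖ ≤ M' * δ ^ 3 := this
      _ = M' * |δ| ^ 3 := by rw [abs_of_nonneg hpos]
      _ ≤ (M' + 1) * |δ| ^ 3 := by nlinarith
  · -- negative side: apply to f ∘ neg
    set g : ℝ → E := fun t => f (-t) with hg
    have hgc : ContDiff ℝ 3 g := hf.comp contDiff_neg
    have hgk : ∀ k : ℕ, iteratedDeriv k g 0 = (-1:ℝ) ^ k • iteratedDeriv k f 0 := by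
      intro k
      rw [hg, iteratedDeriv_comp_neg k f 0, neg_zero]
    have hg0 : iteratedDeriv 0 g 0 = 0 := by rw [hgk, hi0, smul_zero]
    have hg1 : iteratedDeriv 1 g 0 = 0 := by rw [hgk, hi1, smul_zero]
    have hg2 : iteratedDeriv 2 g 0 = 0 := by rw [hgk, hi2, smul_zero]
    have hgM : ∀ y ∈ Icc (0:ℝ) 1, ‖iteratedDeriv 3 g y‖ ≤ M' := by
      intro y hy
      rw [hg, iteratedDeriv_comp_neg 3 f y, norm_smul]
      have : ‖(-1:ℝ) ^ 3‖ = 1 := by norm_num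
      rw [this, one_mul]
      exact hM'B (-y) ⟨by linarith [hy.2], by linarith [hy.1]⟩
    have hmem : -δ ∈ Icc (0:ℝ) 1 := by
      constructor
      · linarith
      · rwa [abs_of_neg hneg] at hδ
    have := taylor_cube_aux hgc hg0 hg1 hg2 hgM (-δ) hmem
    simp only [hg, neg_neg] at this
    calc ‖f δ‖ ≤ M' * (-δ) ^ 3 := this
      _ = M' * |δ| ^ 3 := by rw [abs_of_neg hneg]
      _ ≤ (M' + 1) * |δ| ^ 3 := by nlinarith

end TaylorCube

section ExpLemmas

variable {𝔸 : Type*} [NormedRing 𝔸] [NormedAlgebra ℂ 𝔸] [CompleteSpace 𝔸]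

private lemma coe_smul'' (t : ℝ) (x : 𝔸) : (t : ℂ) • x = t • x :=
  Complex.coe_smul t x

private lemma expR_contDiff (X : 𝔸) : ContDiff ℝ 3 (fun δ : ℝ => exp (δ • X)) := by
  have h1 : ContDiff ℂ 3 (exp : 𝔸 → 𝔸) := by
    rw [contDiff_iff_contDiffAt]
    intro x
    exact (analyticAt_exp_of_mem_ball (𝕂 := ℂ) x
      ((expSeries_radius_eq_top ℂ 𝔸).symm ▸ edist_lt_top _ _)).contDiffAt
  have h2 : ContDiff ℝ 3 (fun δ : ℝ => δ • X) := by
    have := (ContinuousLinearMap.smulRight (1 : ℝ →L[ℝ] ℝ) X).contDiff (n := 3)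
    exact contDiff_id.smul contDiff_const
  exact (h1.restrict_scalars ℝ).comp h2

private lemma expR_hasDerivAt (X : 𝔸) (δ : ℝ) :
    HasDerivAt (fun t : ℝ => exp (t • X)) (X * exp (δ • X)) δ := by
  have h := hasDerivAt_exp_smul_const' (𝕂 := ℂ) X (δ : ℂ)
  have h2 : HasDerivAt (fun y : ℝ => exp ((y : ℂ) • X)) (X * exp ((δ : ℂ) • X)) δ := by
    have hc := (h.hasFDerivAt.restrictScalars ℝ).comp δ Complex.ofRealCLM.hasFDerivAt
    have hd := hc.hasDerivAt
    simpa [Function.comp_def] using hd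
  simp only [coe_smul''] at h2
  exact h2

end ExpLemmas

open NormedSpace in
/-- Strang splitting is second-order accurate: in a complex Banach algebra,
`exp(δ(A+B)) = exp(δB/2)·exp(δA)·exp(δB/2) + O(δ³)`; explicitly there is
`C > 0` with the error bounded by `C|δ|³` for all `|δ| ≤ 1`. -/
theorem strang_splitting_second_order (𝔸 : Type*) [NormedRing 𝔸]
    [NormedAlgebra ℂ 𝔸] [CompleteSpace 𝔸] (A B : 𝔸) :
    ∃ C > 0, ∀ δ : ℝ, |δ| ≤ 1 →
      ‖exp (δ • (A + B)) -
        exp ((δ / 2) • B) * exp (δ • A) * exp ((δ / 2) • B)‖ ≤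
        C * |δ| ^ 3 := by
  have hrw : ∀ δ : ℝ, (δ / 2) • B = δ • ((2⁻¹ : ℝ) • B) := fun δ => by
    rw [smul_smul, div_eq_mul_inv]
  set B' : 𝔸 := (2⁻¹ : ℝ) • B with hB'
  set f : ℝ → 𝔸 := fun δ =>
    exp (δ • (A + B)) - exp (δ • B') * exp (δ • A) * exp (δ • B') with hfdef
  -- smoothness
  have hsmooth : ContDiff ℝ 3 f :=
    (expR_contDiff (A + B)).sub
      (((expR_contDiff B').mul (expR_contDiff A)).mul (expR_contDiff B'))
  -- value at 0
  have h0 : f 0 = 0 := by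
    simp [hfdef, zero_smul, exp_zero]
  -- first derivative
  have hder : ∀ δ : ℝ, HasDerivAt f
      ((A + B) * exp (δ • (A + B)) -
        (((B' * exp (δ • B')) * exp (δ • A) +
          exp (δ • B') * (A * exp (δ • A))) * exp (δ • B') +
          (exp (δ • B') * exp (δ • A)) * (B' * exp (δ • B')))) δ := by
    intro δ
    exact (expR_hasDerivAt (A + B) δ).sub
      (((expR_hasDerivAt B' δ).mul (expR_hasDerivAt A δ)).mul (expR_hasDerivAt B' δ))
  have hderiv_eq : deriv f = fun δ : ℝ =>
      (A + B) * exp (δ • (A + B)) -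
        (((B' * exp (δ • B')) * exp (δ • A) +
          exp (δ • B') * (A * exp (δ • A))) * exp (δ • B') +
          (exp (δ • B') * exp (δ • A)) * (B' * exp (δ • B'))) :=
    funext fun δ => (hder δ).deriv
  have h1 : deriv f 0 = 0 := by
    rw [hderiv_eq]
    simp only [zero_smul, exp_zero, mul_one, one_mul]
    rw [hB']
    module
  -- second derivative
  have hder2 : HasDerivAt (fun δ : ℝ =>
      (A + B) * exp (δ • (A + B)) -
        (((B' * exp (δ • B')) * exp (δ • A) +
          exp (δ • B') * (A * exp (δ • A))) * exp (δ • B') +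
          (exp (δ • B') * exp (δ • A)) * (B' * exp (δ • B'))))
      (((A + B) * ((A + B) * exp ((0:ℝ) • (A + B)))) -
        ((((B' * (B' * exp ((0:ℝ) • B'))) * exp ((0:ℝ) • A) +
            (B' * exp ((0:ℝ) • B')) * (A * exp ((0:ℝ) • A))) +
          ((B' * exp ((0:ℝ) • B')) * (A * exp ((0:ℝ) • A)) +
            exp ((0:ℝ) • B') * (A * (A * exp ((0:ℝ) • A))))) * exp ((0:ℝ) • B') +
          ((B' * exp ((0:ℝ) • B')) * exp ((0:ℝ) • A) +
            exp ((0:ℝ) • B') * (A * exp ((0:ℝ) • A))) * (B' * exp ((0:ℝ) • B')) +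
          (((B' * exp ((0:ℝ) • B')) * exp ((0:ℝ) • A) +
            exp ((0:ℝ) • B') * (A * exp ((0:ℝ) • A))) * (B' * exp ((0:ℝ) • B')) +
            (exp ((0:ℝ) • B') * exp ((0:ℝ) • A)) * (B' * (B' * exp ((0:ℝ) • B'))))))
      (0:ℝ) := by
    have e1 : HasDerivAt (fun δ : ℝ => (A + B) * exp (δ • (A + B)))
        ((A + B) * ((A + B) * exp ((0:ℝ) • (A + B)))) 0 :=
      (expR_hasDerivAt (A + B) 0).const_mul (A + B)
    have eBp : HasDerivAt (fun δ : ℝ => B' * exp (δ • B'))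
        (B' * (B' * exp ((0:ℝ) • B'))) 0 :=
      (expR_hasDerivAt B' 0).const_mul B'
    have eAq : HasDerivAt (fun δ : ℝ => A * exp (δ • A))
        (A * (A * exp ((0:ℝ) • A))) 0 :=
      (expR_hasDerivAt A 0).const_mul A
    have t1 := eBp.mul (expR_hasDerivAt A 0)
    have t2 := (expR_hasDerivAt B' 0).mul eAq
    have t12 := t1.add t2
    have t123 := t12.mul (expR_hasDerivAt B' 0)
    have pq := (expR_hasDerivAt B' 0).mul (expR_hasDerivAt A 0)
    have t4 := pq.mul eBp
    have total := e1.sub (t123.add t4)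
    exact total
  have h2 : deriv (deriv f) 0 = 0 := by
    rw [hderiv_eq, hder2.deriv]
    simp only [zero_smul, exp_zero, mul_one, one_mul]
    rw [hB']
    simp only [smul_mul_assoc, mul_smul_comm, mul_add, add_mul, smul_add, smul_smul]
    module
  obtain ⟨C, hCpos, hC⟩ := cube_bound hsmooth h0 h1 h2
  refine ⟨C, hCpos, fun δ hδ => ?_⟩
  have := hC δ hδ
  rw [hfdef] at this
  simpa [hrw δ, hB'] using this
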